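/- Let (X,φ,D,I) be an impulsive dynamical system with I(D) ∩ D = ∅, D_ξ open for some ξ > 0, and φ_ξ(D_ξ) ⊆ X_ξ. If x ∈ X_ξ and t > 0 satisfy φ_t(x) ∈ D_ξ, then there exists τ < t with φ_τ(x) ∈ D. -/
import Mathlib


open Set Filter
open scoped ENNReal NNReal Classical Real

variable {α : Type*}

/-- First impulse time `τ₁(x) = inf { t > 0 : φ_t(x) ∈ D }` (`∞` if the orbit never meets `D`). -/
noncomputable def tau1 [MetricSpace α] (φ : ℝ → α → α) (D : Set α) (x : α) : ℝ≥0∞ :=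
  sInf (ENNReal.ofReal '' {t : ℝ | 0 < t ∧ φ t x ∈ D})

/-- The successive impulse points `x⁰ = x`, `x¹ = φ_{τ₁(x)}(x)`,
`x^{n+1} = φ_{τ₁(I(xⁿ))}(I(xⁿ))`. -/
noncomputable def impSeq [MetricSpace α] (φ : ℝ → α → α) (D : Set α) (I : α → α) (x : α) :
    ℕ → α
  | 0 => x
  | n + 1 =>
      let y := if n = 0 then x else I (impSeq φ D I x n)
      φ (tau1 φ D y).toReal y

/-- The successive impulse times `τ_0 = 0`, `τ_{n+1}(x) = τ_n(x) + τ₁(I(xⁿ))`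
(with `τ_1(x) = τ₁(x)`). -/
noncomputable def impTime [MetricSpace α] (φ : ℝ → α → α) (D : Set α) (I : α → α) (x : α) :
    ℕ → ℝ≥0∞
  | 0 => 0
  | n + 1 => impTime φ D I x n + tau1 φ D (if n = 0 then x else I (impSeq φ D I x n))

/-- `(X,φ,D,I)` is an impulsive dynamical system: `φ` is a continuous semiflow, `D` a proper
closed subset, `I` continuous on `D`, every first impulse time is positive, and the total
impulse time is infinite. -/
def IsIDS [MetricSpace α] (φ : ℝ → α → α) (D : Set α) (I : α → α) : Prop :=
  ((∀ x, φ 0 x = x) ∧ ∀ s t : ℝ, 0 ≤ s → 0 ≤ t → ∀ x, φ (s + t) x = φ s (φ t x)) ∧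
  ContinuousOn (fun p : ℝ × α => φ p.1 p.2) (Set.Ici 0 ×ˢ Set.univ) ∧
  IsClosed D ∧ D ≠ Set.univ ∧ ContinuousOn I D ∧
  (∀ x, 0 < tau1 φ D x) ∧ (∀ x, (⨆ n, impTime φ D I x n) = ⊤)

/-- The tube `D_η = ⋃_{x ∈ D} { φ_t(x) : 0 < t < η }`. -/
def tube (φ : ℝ → α → α) (D : Set α) (η : ℝ) : Set α :=
  ⋃ x ∈ D, (fun t => φ t x) '' Set.Ioo 0 η

/-- `X_η = X \ (D ∪ D_η)`. -/
def Xtube (φ : ℝ → α → α) (D : Set α) (η : ℝ) : Set α :=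
  (D ∪ tube φ D η)ᶜ

/-- `ψ` is the impulsive semiflow associated to `(X,φ,D,I)`: it agrees with the impulsive
drift `γ_x` on each interval between consecutive impulse times. -/
def IsImpulsive [MetricSpace α] (φ : ℝ → α → α) (D : Set α) (I : α → α)
    (ψ : ℝ → α → α) : Prop :=
  ∀ x : α,
    (∀ t : ℝ, 0 ≤ t → ENNReal.ofReal t < impTime φ D I x 1 → ψ t x = φ t x) ∧
    (∀ n : ℕ, 1 ≤ n → ∀ t : ℝ, impTime φ D I x n ≤ ENNReal.ofReal t →
      ENNReal.ofReal t < impTime φ D I x (n + 1) →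
      ψ t x = φ (t - (impTime φ D I x n).toReal) (I (impSeq φ D I x n)))

/-- A regular impulsive dynamical system, with the constants `η, ξ` of the definition. -/
def IsRegularIDS [MetricSpace α] (φ : ℝ → α → α) (D : Set α) (I : α → α) (η ξ : ℝ) : Prop :=
  IsIDS φ D I ∧ (I '' D) ∩ D = ∅ ∧ (∃ K : NNReal, LipschitzOnWith K I D) ∧
  0 < ξ ∧ ξ < η / 4 ∧ IsOpen (tube φ D ξ) ∧
  ((fun x => φ ξ x) '' tube φ D ξ ⊆ Xtube φ D ξ) ∧
  (∀ x ∈ I '' D, ∀ t : ℝ, 0 < t → t ≤ ξ → φ t x ∉ I '' D)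

/-- `τ*`: equal to `τ₁` off `D` and to `0` on `D`. -/
noncomputable def tauStar [MetricSpace α] (φ : ℝ → α → α) (D : Set α) (x : α) : ℝ≥0∞ :=
  if x ∈ D then 0 else tau1 φ D x

/-- The relation identifying `x` with `I x` for `x ∈ D`. -/
def IRel (D : Set α) (I : α → α) (x y : α) : Prop :=
  x = y ∨ (x ∈ D ∧ y = I x) ∨ (y ∈ D ∧ x = I y) ∨ (x ∈ D ∧ y ∈ D ∧ I x = I y)

/-- The chain pseudometric on the quotient by `IRel`:
`d̃(x̃,ỹ) = inf { Σ d(pᵢ,qᵢ) }` over chains `p₀ ∈ x̃`, `q_n ∈ ỹ`, `qᵢ ∼ p_{i+1}`. -/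
noncomputable def chainDist (d : α → α → ℝ) (D : Set α) (I : α → α) (x y : α) : ℝ :=
  sInf {r : ℝ | ∃ (n : ℕ) (p q : ℕ → α), IRel D I x (p 0) ∧ IRel D I (q n) y ∧
    (∀ i < n, IRel D I (q i) (p (i + 1))) ∧
    r = ∑ i ∈ Finset.range (n + 1), d (p i) (q i)}


/-- For an impulsive dynamical system with `I(D) ∩ D = ∅`, `D_ξ` open and
`φ_ξ(D_ξ) ⊆ X_ξ`: if `x ∈ X_ξ`, `t > 0` and `φ_t(x) ∈ D_ξ`, then there is `τ < t` with
`φ_τ(x) ∈ D`. -/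
theorem stmt12 {X : Type*} [MetricSpace X] [CompactSpace X]
    (φ : ℝ → X → X) (D : Set X) (I : X → X) (ξ : ℝ) (hIDS : IsIDS φ D I)
    (hID : (I '' D) ∩ D = ∅) (hξ : 0 < ξ) (hopen : IsOpen (tube φ D ξ))
    (hmap : (fun x => φ ξ x) '' tube φ D ξ ⊆ Xtube φ D ξ) :
    ∀ x ∈ Xtube φ D ξ, ∀ t : ℝ, 0 < t → φ t x ∈ tube φ D ξ →
      ∃ τ : ℝ, 0 ≤ τ ∧ τ < t ∧ φ τ x ∈ D := by
  obtain ⟨⟨hφ0, hadd⟩, hcont, hDclosed, -, -, -, -⟩ := hIDS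
  -- key convergence lemma
  have key : ∀ (u : ℕ → ℝ) (a : ℝ) (v : ℕ → X) (b : X),
      Filter.Tendsto u Filter.atTop (nhds a) → (∀ n, 0 ≤ u n) → 0 ≤ a →
      Filter.Tendsto v Filter.atTop (nhds b) →
      Filter.Tendsto (fun n => φ (u n) (v n)) Filter.atTop (nhds (φ a b)) := by
    intro u a v b hu hu0 ha hv
    have h1 : Filter.Tendsto (fun n => ((u n, v n) : ℝ × X)) Filter.atTop
        (nhdsWithin (a, b) (Set.Ici 0 ×ˢ Set.univ)) :=
      tendsto_nhdsWithin_of_tendsto_nhds_of_eventually_within _ (hu.prodMk_nhds hv)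
        (Filter.Eventually.of_forall fun n => ⟨hu0 n, trivial⟩)
    have h2 : Filter.Tendsto (fun p : ℝ × X => φ p.1 p.2)
        (nhdsWithin (a, b) (Set.Ici 0 ×ˢ Set.univ)) (nhds (φ a b)) :=
      hcont (a, b) ⟨ha, trivial⟩
    exact h2.comp h1
  -- continuity of s ↦ φ s z within Ici 0
  have key1 : ∀ (a : ℝ), 0 ≤ a → ∀ z : X,
      Filter.Tendsto (fun s => φ s z) (nhdsWithin a (Set.Ici 0)) (nhds (φ a z)) := by
    intro a ha z
    have h1 : Filter.Tendsto (fun s : ℝ => ((s, z) : ℝ × X)) (nhdsWithin a (Set.Ici 0))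
        (nhdsWithin (a, z) (Set.Ici 0 ×ˢ Set.univ)) := by
      apply tendsto_nhdsWithin_of_tendsto_nhds_of_eventually_within
      · exact ((continuous_id.prodMk continuous_const).tendsto a).mono_left nhdsWithin_le_nhds
      · exact eventually_mem_nhdsWithin.mono fun s hs => ⟨hs, trivial⟩
    have h2 : Filter.Tendsto (fun p : ℝ × X => φ p.1 p.2)
        (nhdsWithin (a, z) (Set.Ici 0 ×ˢ Set.univ)) (nhds (φ a z)) :=
      hcont (a, z) ⟨ha, trivial⟩
    exact h2.comp h1
  intro x hx t ht hmem
  have hxt : x ∉ tube φ D ξ := fun h => hx (Or.inr h)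
  set S : Set ℝ := {s | s ∈ Set.Icc 0 t ∧ φ s x ∈ tube φ D ξ} with hS
  have hS0 : t ∈ S := ⟨⟨le_of_lt ht, le_refl t⟩, hmem⟩
  have hbdd : BddBelow S := ⟨0, fun s hs => hs.1.1⟩
  set s₀ : ℝ := sInf S with hs₀def
  have hs₀0 : 0 ≤ s₀ := le_csInf ⟨t, hS0⟩ fun s hs => hs.1.1
  have hs₀t' : s₀ ≤ t := csInf_le hbdd hS0
  -- s₀ < t
  have hs₀t : s₀ < t := by
    have hev : ∀ᶠ s in nhdsWithin t (Set.Ici 0), φ s x ∈ tube φ D ξ :=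
      (key1 t ht.le x).eventually (hopen.mem_nhds hmem)
    have hIci : nhdsWithin t (Set.Ici (0:ℝ)) = nhds t :=
      nhdsWithin_eq_nhds.2 (Ici_mem_nhds ht)
    rw [hIci] at hev
    have hev2 : ∀ᶠ s in nhds t, 0 < s := eventually_gt_nhds ht
    have hev3 : ∀ᶠ s in nhdsWithin t (Set.Iio t), φ s x ∈ tube φ D ξ ∧ 0 < s :=
      (hev.and hev2).filter_mono nhdsWithin_le_nhds
    obtain ⟨s, hs1, hs2⟩ := (hev3.and self_mem_nhdsWithin).exists
    have hsS : s ∈ S := ⟨⟨hs1.2.le, le_of_lt hs2⟩, hs1.1⟩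
    exact lt_of_le_of_lt (csInf_le hbdd hsS) hs2
  -- φ s₀ x ∉ tube
  have htube0 : φ s₀ x ∉ tube φ D ξ := by
    intro hc
    rcases eq_or_lt_of_le hs₀0 with h0 | h0
    · rw [← h0, hφ0] at hc; exact hxt hc
    · have hev : ∀ᶠ s in nhdsWithin s₀ (Set.Ici 0), φ s x ∈ tube φ D ξ :=
        (key1 s₀ hs₀0 x).eventually (hopen.mem_nhds hc)
      have hIci : nhdsWithin s₀ (Set.Ici (0:ℝ)) = nhds s₀ :=
        nhdsWithin_eq_nhds.2 (Ici_mem_nhds h0)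
      rw [hIci] at hev
      have hev2 : ∀ᶠ s in nhds s₀, 0 < s := eventually_gt_nhds h0
      have hev3 : ∀ᶠ s in nhdsWithin s₀ (Set.Iio s₀), φ s x ∈ tube φ D ξ ∧ 0 < s :=
        (hev.and hev2).filter_mono nhdsWithin_le_nhds
      obtain ⟨s, hs1, hs2⟩ := (hev3.and self_mem_nhdsWithin).exists
      have hsS : s ∈ S := ⟨⟨hs1.2.le, le_of_lt (lt_of_lt_of_le hs2 hs₀t')⟩, hs1.1⟩
      exact absurd (csInf_le hbdd hsS) (not_le.2 hs2)
  -- sequence tending to sInf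
  obtain ⟨u, -, hu_tend, hu_mem⟩ := exists_seq_tendsto_sInf ⟨t, hS0⟩ hbdd
  have hu0 : ∀ n, 0 ≤ u n := fun n => (hu_mem n).1.1
  have hchoice : ∀ n, ∃ y, y ∈ D ∧ ∃ r, (0 < r ∧ r < ξ) ∧ φ r y = φ (u n) x := by
    intro n
    have := (hu_mem n).2
    simpa [tube, Set.mem_iUnion, Set.mem_image, Set.mem_Ioo] using this
  choose y hyD r hr hyr using hchoice
  obtain ⟨p, hp, k, hk, hconv⟩ :=
    ((isCompact_Icc (a := (0:ℝ)) (b := ξ)).prod isCompact_univ).tendsto_subseq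
      (x := fun n => ((r n, y n) : ℝ × X))
      (fun n => ⟨⟨(hr n).1.le, (hr n).2.le⟩, trivial⟩)
  have hrt : Filter.Tendsto (fun n => r (k n)) Filter.atTop (nhds p.1) :=
    (continuous_fst.tendsto p).comp hconv
  have hyt : Filter.Tendsto (fun n => y (k n)) Filter.atTop (nhds p.2) :=
    (continuous_snd.tendsto p).comp hconv
  have hyDlim : p.2 ∈ D :=
    hDclosed.mem_of_tendsto hyt (Filter.Eventually.of_forall fun n => hyD (k n))
  have hp1 : (0:ℝ) ≤ p.1 ∧ p.1 ≤ ξ := ⟨hp.1.1, hp.1.2⟩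
  have hut : Filter.Tendsto (fun n => u (k n)) Filter.atTop (nhds s₀) :=
    hu_tend.comp hk.tendsto_atTop
  have hA : Filter.Tendsto (fun n => φ (r (k n)) (y (k n))) Filter.atTop (nhds (φ p.1 p.2)) :=
    key _ _ _ _ hrt (fun n => (hr (k n)).1.le) hp1.1 hyt
  have hB : Filter.Tendsto (fun n => φ (u (k n)) x) Filter.atTop (nhds (φ s₀ x)) :=
    key _ _ _ _ hut (fun n => hu0 (k n)) hs₀0 tendsto_const_nhds
  have heq : φ p.1 p.2 = φ s₀ x := by
    refine tendsto_nhds_unique ?_ hB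
    have : (fun n => φ (r (k n)) (y (k n))) = fun n => φ (u (k n)) x := by
      funext n; exact hyr (k n)
    rwa [this] at hA
  rcases eq_or_lt_of_le hp1.1 with h0 | h0
  · -- p.1 = 0 : φ s₀ x ∈ D
    refine ⟨s₀, hs₀0, hs₀t, ?_⟩
    rw [← heq, ← h0, hφ0]; exact hyDlim
  rcases lt_or_eq_of_le hp1.2 with hlt | hξeq
  · -- 0 < p.1 < ξ : contradiction with htube0
    exfalso
    apply htube0
    rw [← heq]
    exact Set.mem_biUnion hyDlim ⟨p.1, ⟨h0, hlt⟩, rfl⟩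
  · -- p.1 = ξ
    exfalso
    have husgt : ∀ n, s₀ < u (k n) := by
      intro n
      rcases lt_or_eq_of_le (csInf_le hbdd (hu_mem (k n))) with h | h
      · exact h
      · exact absurd (show φ s₀ x ∈ tube φ D ξ by rw [hs₀def, h]; exact (hu_mem (k n)).2) htube0
    have : ∀ᶠ n in Filter.atTop, u (k n) < s₀ + ξ := by
      apply hut.eventually_lt_const
      linarith
    obtain ⟨n, hn⟩ := this.exists
    set ε : ℝ := u (k n) - s₀ with hε
    have hε0 : 0 < ε := by simp [hε]; linarith [husgt n]
    have hεξ : ε < ξ := by simp [hε]; linarith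
    have hstep : φ (u (k n)) x = φ ξ (φ ε p.2) := by
      have h1 : φ (u (k n)) x = φ ε (φ s₀ x) := by
        rw [← hadd ε s₀ hε0.le hs₀0]
        congr 1; simp [hε]
      have h2 : φ s₀ x = φ ξ p.2 := by rw [← heq, hξeq]
      have h3 : φ ε (φ ξ p.2) = φ (ε + ξ) p.2 := (hadd ε ξ hε0.le hξ.le p.2).symm
      have h4 : φ (ξ + ε) p.2 = φ ξ (φ ε p.2) := hadd ξ ε hξ.le hε0.le p.2
      rw [h1, h2, h3, add_comm, h4]
    have hmem2 : φ ε p.2 ∈ tube φ D ξ := Set.mem_biUnion hyDlim ⟨ε, ⟨hε0, hεξ⟩, rfl⟩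
    have hXt : φ (u (k n)) x ∈ Xtube φ D ξ := by
      rw [hstep]; exact hmap ⟨φ ε p.2, hmem2, rfl⟩
    exact hXt (Or.inr (hu_mem (k n)).2)
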